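/- Let G(v) = (3+σ̄)v/2 and v₀ = √(2(3σ-σ̄)/((1+3σ)(3+σ̄))) with σ̄ = H(σ) = (1/2)√(9σ²+54σ+49) - (3/2)σ - 7/2 and 0 < σ < 1. Then the inequality (G(v₀)-v₀)/(1-G(v₀)v₀) < √σ holds if and only if 0 < σ < (1+√10)/9. -/

import Mathlib

set_option maxHeartbeats 1000000

theorem stmt5 (σ : ℝ) (h0 : 0 < σ) (h1 : σ < 1) :
    let σb : ℝ := (1/2)*Real.sqrt (9*σ^2 + 54*σ + 49) - (3/2)*σ - 7/2
    let v₀ : ℝ := Real.sqrt (2*(3*σ - σb)/((1+3*σ)*(3+σb)))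
    let G₀ : ℝ := (3+σb)*v₀/2
    ((G₀ - v₀)/(1 - G₀*v₀) < Real.sqrt σ ↔ 0 < σ ∧ σ < (1 + Real.sqrt 10)/9) := by
  intro σb v₀ G₀
  obtain ⟨s, hs_def⟩ : ∃ s, s = Real.sqrt (9*σ^2 + 54*σ + 49) := ⟨_, rfl⟩
  have hsq_nonneg : (0:ℝ) ≤ 9*σ^2 + 54*σ + 49 := by nlinarith
  have hs2 : s^2 = 9*σ^2 + 54*σ + 49 := by rw [hs_def]; exact Real.sq_sqrt hsq_nonneg
  have hs_pos : 0 < s := by rw [hs_def]; exact Real.sqrt_pos.mpr (by nlinarith)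
  have hs_lb : 3*σ + 7 < s := by
    rw [hs_def, Real.lt_sqrt (by linarith)]; nlinarith
  have hs_ub : s < 9*σ + 7 := by
    rw [hs_def, Real.sqrt_lt' (by linarith)]; nlinarith
  have hσb : σb = (s - 3*σ - 7)/2 := by
    have h' : σb = (1/2)*Real.sqrt (9*σ^2 + 54*σ + 49) - (3/2)*σ - 7/2 := rfl
    rw [h', ← hs_def]; ring
  have hσb_pos : 0 < σb := by rw [hσb]; linarith
  have hσb_ub : σb < 3*σ := by rw [hσb]; linarith
  have hden_pos : (0:ℝ) < (1+3*σ)*(3+σb) := by nlinarith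
  have harg_pos : (0:ℝ) < 2*(3*σ - σb)/((1+3*σ)*(3+σb)) := by
    apply div_pos (by linarith) hden_pos
  have hv_def : v₀ = Real.sqrt (2*(3*σ - σb)/((1+3*σ)*(3+σb))) := rfl
  have hv2 : v₀^2 = 2*(3*σ - σb)/((1+3*σ)*(3+σb)) := by
    rw [hv_def]; exact Real.sq_sqrt (le_of_lt harg_pos)
  have hv_pos : 0 < v₀ := by rw [hv_def]; exact Real.sqrt_pos.mpr harg_pos
  have hG : G₀ = (3+σb)*v₀/2 := rfl
  clear_value σb v₀ G₀
  clear hv_def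
  have hGv : G₀ * v₀ = (3*σ - σb)/(1+3*σ) := by
    rw [hG]
    have : (3+σb)*v₀/2 * v₀ = (3+σb)/2 * v₀^2 := by ring
    rw [this, hv2]
    field_simp
  have h1den : 1 - G₀*v₀ = (1+σb)/(1+3*σ) := by
    rw [hGv]; field_simp; ring
  have hE : (G₀ - v₀)/(1 - G₀*v₀) = v₀*(1+3*σ)/2 := by
    rw [h1den, hG]
    field_simp
    ring
  rw [hE]
  obtain ⟨t, ht_def⟩ : ∃ t, t = Real.sqrt 10 := ⟨_, rfl⟩
  rw [← ht_def]
  have ht2 : t^2 = 10 := by rw [ht_def]; exact Real.sq_sqrt (by norm_num)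
  have ht_pos : 0 < t := by rw [ht_def]; exact Real.sqrt_pos.mpr (by norm_num)
  have ht3 : 3 < t := by nlinarith
  have key : v₀*(1+3*σ)/2 < Real.sqrt σ ↔ σb*(1+5*σ) > 3*σ*(3*σ-1) := by
    rw [Real.lt_sqrt (by positivity)]
    have hexp : (v₀*(1+3*σ)/2)^2 = (3*σ - σb)*(1+3*σ)/(2*(3+σb)) := by
      have : (v₀*(1+3*σ)/2)^2 = v₀^2 * (1+3*σ)^2/4 := by ring
      rw [this, hv2]
      field_simp
      ring
    rw [hexp, div_lt_iff₀ (by nlinarith)]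
    constructor <;> intro h <;> nlinarith
  rw [key]
  have key2 : σb*(1+5*σ) > 3*σ*(3*σ-1) ↔ 9*σ^2 - 2*σ - 1 < 0 := by
    rw [hσb]
    constructor
    · intro h
      have hgt : s*(1+5*σ) > 33*σ^2 + 32*σ + 7 := by nlinarith [h]
      have hP : (0:ℝ) < 33*σ^2 + 32*σ + 7 := by nlinarith
      have hsq : (s*(1+5*σ))^2 > (33*σ^2 + 32*σ + 7)^2 := by nlinarith
      nlinarith [hsq, hs2, mul_pos h0 (show (0:ℝ) < σ + 1 by linarith)]
    · intro h
      have hsq : (s*(1+5*σ))^2 > (33*σ^2 + 32*σ + 7)^2 := by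
        nlinarith [hs2, mul_pos h0 (show (0:ℝ) < σ + 1 by linarith)]
      have hgt : s*(1+5*σ) > 33*σ^2 + 32*σ + 7 := by
        nlinarith [hsq, sq_nonneg (s*(1+5*σ) - (33*σ^2 + 32*σ + 7)),
          mul_pos hs_pos (show (0:ℝ) < 1+5*σ by linarith)]
      linarith
  rw [key2]
  constructor
  · intro h
    refine ⟨h0, ?_⟩
    have h91 : 9*σ - 1 < t := by
      rcases le_or_gt (9*σ - 1) 0 with hc | hc
      · linarith
      · nlinarith
    linarith
  · rintro ⟨-, h⟩
    have h91 : 9*σ - 1 < t := by linarith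
    nlinarith [mul_pos (show (0:ℝ) < t - (9*σ-1) by linarith)
      (show (0:ℝ) < t + (9*σ-1) by nlinarith)]
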